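/- arXiv:2209.12819 — 2 statements merged into one kernel-verified Lean document; each statement's English description precedes it below -/
import Mathlib

section
/- Let ℱ be a family of dangers and r ≥ 1 an integer. For every marked hypergraph H with |V(H)∖M(H)| ≥ 2r, the property J_r(ℱ,H) holds if and only if J_1(ℱ^{*(r−1)},H) holds. -/
namespace MB

/-- A marked hypergraph: a finite vertex set, an edge set of finite subsets of vertices,
and a set of marked vertices. -/
structure MarkedHypergraph (V : Type) where
  verts : Finset V
  edges : Finset (Finset V)
  marked : Finset V

namespace MarkedHypergraph

variable {V : Type} [DecidableEq V]

/-- The structural requirements on a marked hypergraph: nonempty vertex set, edges are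
nonempty subsets of the vertex set, marked vertices are vertices. -/
def IsValid (H : MarkedHypergraph V) : Prop :=
  H.verts.Nonempty ∧ (∀ e ∈ H.edges, e ⊆ H.verts ∧ e.Nonempty) ∧ H.marked ⊆ H.verts

/-- `k`-uniformity: every edge has exactly `k` vertices. -/
def IsUniform (H : MarkedHypergraph V) (k : ℕ) : Prop :=
  ∀ e ∈ H.edges, e.card = k

/-- `H^{+x}`: mark the vertex `x`. -/
def plus (H : MarkedHypergraph V) (x : V) : MarkedHypergraph V :=
  ⟨H.verts, H.edges, insert x H.marked⟩

/-- `H^{-y}`: remove the vertex `y` and all edges containing it. -/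
def minus (H : MarkedHypergraph V) (y : V) : MarkedHypergraph V :=
  ⟨H.verts.erase y, H.edges.filter fun e => y ∉ e, H.marked.erase y⟩

/-- `X` is a subhypergraph of `H`. -/
def IsSub (X H : MarkedHypergraph V) : Prop :=
  X.verts ⊆ H.verts ∧ X.edges ⊆ H.edges ∧ X.marked = X.verts ∩ H.marked

/-- A trivial Maker win: some edge has at most one non-marked vertex. -/
def TrivialMakerWin (H : MarkedHypergraph V) : Prop :=
  ∃ e ∈ H.edges, (e \ H.marked).card ≤ 1

theorem card_free_lt (H : MarkedHypergraph V) (x y : V)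
    (hy : y ∈ (H.plus x).verts \ (H.plus x).marked) :
    (((H.plus x).minus y).verts \ ((H.plus x).minus y).marked).card
      < (H.verts \ H.marked).card := by
  have hy' : y ∈ H.verts \ insert x H.marked := hy
  rw [Finset.mem_sdiff] at hy'
  have hyv : y ∈ H.verts := hy'.1
  have hym : y ∉ H.marked := fun h => hy'.2 (Finset.mem_insert_of_mem h)
  show (H.verts.erase y \ (insert x H.marked).erase y).card < (H.verts \ H.marked).card
  calc (H.verts.erase y \ (insert x H.marked).erase y).card
      ≤ ((H.verts \ H.marked).erase y).card := by
        apply Finset.card_le_card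
        intro v hv
        rw [Finset.mem_sdiff, Finset.mem_erase] at hv
        rw [Finset.mem_erase, Finset.mem_sdiff]
        exact ⟨hv.1.1, hv.1.2, fun hvm =>
          hv.2 (Finset.mem_erase.mpr ⟨hv.1.1, Finset.mem_insert_of_mem hvm⟩)⟩
    _ < (H.verts \ H.marked).card :=
        Finset.card_erase_lt_of_mem (Finset.mem_sdiff.mpr ⟨hyv, hym⟩)

/-- Maker win, defined by recursion on the number of non-marked vertices:
if at most one non-marked vertex remains, Maker wins iff the position is a trivial Maker
win; otherwise Maker wins iff he has a pick `x` such that for every answer `y` of Breaker,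
the resulting position is a Maker win. -/
def MakerWin (H : MarkedHypergraph V) : Prop :=
  if (H.verts \ H.marked).card ≤ 1 then TrivialMakerWin H
  else ∃ x ∈ H.verts \ H.marked,
    ∀ y ∈ (H.plus x).verts \ (H.plus x).marked, MakerWin ((H.plus x).minus y)
termination_by (H.verts \ H.marked).card
decreasing_by exact card_free_lt H _ _ (by assumption)

/-- Breaker win: not a Maker win. -/
def BreakerWin (H : MarkedHypergraph V) : Prop := ¬ H.MakerWin

open Classical in
/-- `τ_M(H)`: the minimum number of rounds Maker needs to claim a fully marked edge
(`⊤` if Breaker wins). -/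
noncomputable def tauM (H : MarkedHypergraph V) : ℕ∞ :=
  if TrivialMakerWin H then H.edges.inf fun e => ((e \ H.marked).card : ℕ∞)
  else if (H.verts \ H.marked).card ≤ 1 then (⊤ : ℕ∞)
  else 1 + (H.verts \ H.marked).inf fun x =>
    ((H.plus x).verts \ (H.plus x).marked).attach.sup fun y =>
      tauM ((H.plus x).minus y.1)
termination_by (H.verts \ H.marked).card
decreasing_by exact card_free_lt H _ _ y.2

end MarkedHypergraph

open MarkedHypergraph

variable {V : Type} [DecidableEq V]

/-- The intersection `I_H(𝒳)` of a collection `𝒳` of marked hypergraphs in `H`. -/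
def inter (H : MarkedHypergraph V) (𝒳 : Set (MarkedHypergraph V)) : Set V :=
  {y | y ∈ H.verts ∧ y ∉ H.marked ∧ ∀ X ∈ 𝒳, y ∈ X.verts}

/-- The union of a finite collection of marked hypergraphs. -/
def unionOf (O : Finset (MarkedHypergraph V)) : MarkedHypergraph V :=
  ⟨O.sup MarkedHypergraph.verts, O.sup MarkedHypergraph.edges, O.sup MarkedHypergraph.marked⟩

/-- Isomorphism of pointed marked hypergraphs. -/
def PointedIso (X : MarkedHypergraph V) (x : V) (Y : MarkedHypergraph V) (y : V) : Prop :=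
  ∃ φ : V → V, Set.InjOn φ ↑X.verts ∧ X.verts.image φ = Y.verts ∧
    (∀ e : Finset V, e ⊆ X.verts → (e ∈ X.edges ↔ e.image φ ∈ Y.edges)) ∧
    (∀ v ∈ X.verts, (v ∈ X.marked ↔ φ v ∈ Y.marked)) ∧ φ x = y

/-- `(D,x)` is a danger: `x` is a non-marked vertex and `D^{+x}` is a Maker win. -/
def IsDanger (D : MarkedHypergraph V) (x : V) : Prop :=
  x ∈ D.verts ∧ x ∉ D.marked ∧ (D.plus x).MakerWin

/-- A family of dangers: a set of pointed marked hypergraphs, all of which are dangers. -/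
def IsDangerFamily (F : Set (MarkedHypergraph V × V)) : Prop :=
  ∀ p ∈ F, IsDanger p.1 p.2

/-- The collection of all dangers at `x` in `H`: subhypergraphs `D` of `H` containing `x`
such that `D^{+x}` is a Maker win. -/
def dangersAt (H : MarkedHypergraph V) (x : V) : Set (MarkedHypergraph V) :=
  {D | D.IsValid ∧ D.IsSub H ∧ x ∈ D.verts ∧ (D.plus x).MakerWin}

/-- `xℱ(H)`: the collection of subhypergraphs `X` of `H` containing `x` such that `(X,x)`
is isomorphic to a member of the family `F`. -/
def xFam (F : Set (MarkedHypergraph V × V)) (H : MarkedHypergraph V) (x : V) :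
    Set (MarkedHypergraph V) :=
  {X | X.IsValid ∧ X.IsSub H ∧ x ∈ X.verts ∧ ∃ p ∈ F, PointedIso X x p.1 p.2}

/-- `J F r H` is the property `J_r(ℱ,H)` (for `r ≥ 1`; `J F 0 H` is `True` by convention). -/
def J (F : Set (MarkedHypergraph V × V)) : ℕ → MarkedHypergraph V → Prop
  | 0, _ => True
  | r + 1, H => ∀ x ∈ H.verts \ H.marked,
      ∃ y ∈ inter (H.plus x) (xFam F H x), J F r ((H.plus x).minus y)

/-- `P` is an `ab`-path (in a 3-uniform setting) of length `L`. -/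
def IsPathLen (P : MarkedHypergraph V) (a b : V) (L : ℕ) : Prop :=
  (L = 0 ∧ a = b ∧ P.verts = {a} ∧ P.edges = ∅) ∨
  (1 ≤ L ∧ a ≠ b ∧ ∃ e : ℕ → Finset V,
    P.edges = (Finset.range L).image e ∧
    P.verts = (Finset.range L).biUnion e ∧
    (∀ i, i < L → (e i).card = 3) ∧
    (∀ i j, i < L → j < L → i ≠ j → e i ≠ e j) ∧
    a ∈ e 0 ∧ b ∈ e (L - 1) ∧
    (∀ i, i + 1 < L → (e i ∩ e (i + 1)).card = 1) ∧
    (∀ i j, i + 2 ≤ j → j < L → e i ∩ e j = ∅) ∧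
    (∀ i, 1 ≤ i → i < L → a ∉ e i) ∧
    (∀ i, i + 1 < L → b ∉ e i))

/-- `P` is an `ab`-path. -/
def IsPath (P : MarkedHypergraph V) (a b : V) : Prop := ∃ L, IsPathLen P a b L

/-- `C` is an `a`-cycle of length `L`. -/
def IsCycleLen (C : MarkedHypergraph V) (a : V) (L : ℕ) : Prop :=
  2 ≤ L ∧ ∃ e : ℕ → Finset V,
    C.edges = (Finset.range L).image e ∧
    C.verts = (Finset.range L).biUnion e ∧
    (∀ i, i < L → (e i).card = 3) ∧
    (∀ i j, i < L → j < L → i ≠ j → e i ≠ e j) ∧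
    a ∈ e 0 ∧ a ∈ e (L - 1) ∧
    (∀ i, 0 < i → i + 1 < L → a ∉ e i) ∧
    (L = 2 → (e 0 ∩ e 1).card = 2) ∧
    (3 ≤ L → (e 0 ∩ e (L - 1) = {a} ∧ ∀ i, i + 1 < L → (e i ∩ e (i + 1)).card = 1)) ∧
    (∀ i j, i < j → j < L → 2 ≤ j - i → j - i ≤ L - 2 → e i ∩ e j = ∅)

/-- `C` is an `a`-cycle. -/
def IsCycle (C : MarkedHypergraph V) (a : V) : Prop := ∃ L, IsCycleLen C a L

/-- `T` is an `a`-tadpole: the union of an `ab`-path and a `b`-cycle meeting only at `b`. -/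
def IsTadpole (T : MarkedHypergraph V) (a : V) : Prop :=
  ∃ b P C, IsPath P a b ∧ IsCycle C b ∧ P.verts ∩ C.verts = {b} ∧
    T.verts = P.verts ∪ C.verts ∧ T.edges = P.edges ∪ C.edges

/-- `S` is an `x`-snake: an `xm`-path of positive length with `m` marked. -/
def IsSnake (S : MarkedHypergraph V) (x : V) : Prop :=
  ∃ m L, 1 ≤ L ∧ IsPathLen S x m L ∧ m ∈ S.marked

/-- `N` is a nunchaku: an `ab`-path of positive length with marked set exactly `{a,b}`. -/
def IsNunchaku (N : MarkedHypergraph V) : Prop :=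
  ∃ a b L, 1 ≤ L ∧ IsPathLen N a b L ∧ N.marked = {a, b}

/-- `C` is an `a`-necklace: an `a`-cycle with marked set exactly `{a}`. -/
def IsNecklace (C : MarkedHypergraph V) (a : V) : Prop :=
  ∃ L, IsCycleLen C a L ∧ C.marked = {a}

/-- The family `𝒮` of pointed snakes with exactly one marked vertex. -/
def famS : Set (MarkedHypergraph V × V) := {p | IsSnake p.1 p.2 ∧ p.1.marked.card = 1}

/-- The family `𝒞` of pointed cycles with no marked vertex. -/
def famC : Set (MarkedHypergraph V × V) := {p | IsCycle p.1 p.2 ∧ p.1.marked = ∅}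

/-- The family `𝒯` of pointed tadpoles with no marked vertex. -/
def famT : Set (MarkedHypergraph V × V) := {p | IsTadpole p.1 p.2 ∧ p.1.marked = ∅}

/-- `𝒟₀ = 𝒮 ∪ 𝒞`. -/
def famD0 : Set (MarkedHypergraph V × V) := famS ∪ famC

/-- `𝒟₁ = 𝒮 ∪ 𝒯`. -/
def famD1 : Set (MarkedHypergraph V × V) := famS ∪ famT

/-- `obs(ℱ)`: pointed marked hypergraphs `(D,x)` which, for some `ℱ`-dangerous vertex `z`,
are the union of a collection `𝒪` of subhypergraphs, each of which is (or becomes, once `x`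
is marked) an `ℱ`-danger at `z`, with `I_{D^{+x+z}}(𝒪) = ∅`. -/
def obs (F : Set (MarkedHypergraph V × V)) : Set (MarkedHypergraph V × V) :=
  {p | p.2 ∈ p.1.verts ∧ p.2 ∉ p.1.marked ∧
    ∃ z, z ∈ p.1.verts ∧ z ∉ p.1.marked ∧ z ≠ p.2 ∧
      ∃ O : Set (MarkedHypergraph V),
        (∀ X ∈ O, X.IsValid ∧ X.IsSub p.1) ∧
        (∀ X ∈ O, p.2 ∈ X.verts → X.plus p.2 ∈ xFam F (p.1.plus p.2) z) ∧
        (∀ X ∈ O, p.2 ∉ X.verts → X ∈ xFam F p.1 z) ∧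
        (∀ v ∈ p.1.verts, ∃ X ∈ O, v ∈ X.verts) ∧
        (∀ e ∈ p.1.edges, ∃ X ∈ O, e ∈ X.edges) ∧
        (∀ m ∈ p.1.marked, ∃ X ∈ O, m ∈ X.marked) ∧
        inter ((p.1.plus p.2).plus z) O = ∅}

/-- `obsr(ℱ)`: the members `(D,x)` of `obs(ℱ)` such that `D` contains no `ℱ`-danger at `x`. -/
def obsr (F : Set (MarkedHypergraph V × V)) : Set (MarkedHypergraph V × V) :=
  {p | p ∈ obs F ∧ xFam F p.1 p.2 = ∅}

/-- `ℱ^{*r}`. -/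
def star (F : Set (MarkedHypergraph V × V)) : ℕ → Set (MarkedHypergraph V × V)
  | 0 => F
  | r + 1 => F ∪ obs (star F r)

/-- `𝒟₂ = 𝒟₁ ∪ obsr(𝒟₁)`. -/
def famD2 : Set (MarkedHypergraph V × V) := famD1 ∪ obsr famD1

/-- The lengths of nunchakus contained in `H`. -/
def nunchakuLengths (H : MarkedHypergraph V) : Set ℕ :=
  {L | 1 ≤ L ∧ ∃ N a b, N.IsSub H ∧ IsPathLen N a b L ∧ N.marked = {a, b}}

/-- `H` contains a fully marked edge, a nunchaku, or a necklace. -/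
def WinPattern (H : MarkedHypergraph V) : Prop :=
  (∃ e ∈ H.edges, e ⊆ H.marked) ∨ (∃ N, N.IsSub H ∧ IsNunchaku N) ∨
    (∃ C a, C.IsSub H ∧ IsNecklace C a)

/-- `Wk k H`: Maker can force that after `k` rounds of play the updated marked hypergraph
contains a fully marked edge, a nunchaku or a necklace. -/
def Wk : ℕ → MarkedHypergraph V → Prop
  | 0, H => WinPattern H
  | k + 1, H => ∃ x ∈ H.verts \ H.marked,
      ∀ y ∈ (H.plus x).verts \ (H.plus x).marked, Wk k ((H.plus x).minus y)

end MB
section Aux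
open MB MB.MarkedHypergraph
variable {V : Type} [DecidableEq V]

lemma isSub_trans {X Y Z : MB.MarkedHypergraph V} (h1 : X.IsSub Y) (h2 : Y.IsSub Z) :
    X.IsSub Z := by
  obtain ⟨hv1, he1, hm1⟩ := h1
  obtain ⟨hv2, he2, hm2⟩ := h2
  refine ⟨hv1.trans hv2, he1.trans he2, ?_⟩
  rw [hm1, hm2]
  ext v
  simp only [Finset.mem_inter]
  exact ⟨fun h => ⟨h.1, h.2.2⟩, fun h => ⟨h.1, hv1 h.1, h.2⟩⟩

lemma isSub_plus {X H : MB.MarkedHypergraph V} (h : X.IsSub H) {x : V} (hx : x ∈ X.verts) :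
    (X.plus x).IsSub (H.plus x) := by
  obtain ⟨hv, he, hm⟩ := h
  refine ⟨hv, he, ?_⟩
  show insert x X.marked = X.verts ∩ insert x H.marked
  rw [hm]
  ext v
  simp only [Finset.mem_insert, Finset.mem_inter]
  constructor
  · rintro (rfl | ⟨h1, h2⟩)
    · exact ⟨hx, Or.inl rfl⟩
    · exact ⟨h1, Or.inr h2⟩
  · rintro ⟨h1, rfl | h2⟩
    · exact Or.inl rfl
    · exact Or.inr ⟨h1, h2⟩

lemma isSub_plus_of_notMem {X H : MB.MarkedHypergraph V} (h : X.IsSub H) {x : V}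
    (hx : x ∉ X.verts) : X.IsSub (H.plus x) := by
  obtain ⟨hv, he, hm⟩ := h
  refine ⟨hv, he, ?_⟩
  show X.marked = X.verts ∩ insert x H.marked
  rw [hm]
  ext v
  simp only [Finset.mem_inter, Finset.mem_insert]
  constructor
  · rintro ⟨h1, h2⟩; exact ⟨h1, Or.inr h2⟩
  · rintro ⟨h1, rfl | h2⟩
    · exact absurd h1 hx
    · exact ⟨h1, h2⟩

lemma isSub_minus {X H : MB.MarkedHypergraph V} (h : X.IsSub H) {y : V}
    (hy : y ∉ X.verts) (hE : ∀ e ∈ X.edges, e ⊆ X.verts) : X.IsSub (H.minus y) := by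
  obtain ⟨hv, he, hm⟩ := h
  refine ⟨?_, ?_, ?_⟩
  · intro v hvX
    exact Finset.mem_erase.mpr ⟨fun h' => hy (h' ▸ hvX), hv hvX⟩
  · intro e heX
    exact Finset.mem_filter.mpr ⟨he heX, fun h' => hy (hE e heX h')⟩
  · show X.marked = X.verts ∩ H.marked.erase y
    rw [hm]
    ext v
    simp only [Finset.mem_inter, Finset.mem_erase]
    constructor
    · rintro ⟨h1, h2⟩; exact ⟨h1, fun h' => hy (h' ▸ h1), h2⟩
    · rintro ⟨h1, _, h2⟩; exact ⟨h1, h2⟩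

lemma xFam_mono {F F' : Set (MB.MarkedHypergraph V × V)} (h : F ⊆ F')
    {H : MB.MarkedHypergraph V} {x : V} : MB.xFam F H x ⊆ MB.xFam F' H x := by
  rintro X ⟨h1, h2, h3, p, hp, hiso⟩
  exact ⟨h1, h2, h3, p, h hp, hiso⟩

lemma obs_mono {F F' : Set (MB.MarkedHypergraph V × V)} (h : F ⊆ F') :
    MB.obs F ⊆ MB.obs F' := by
  rintro ⟨D, x⟩ ⟨h1, h2, z, hz1, hz2, hz3, O, hO1, hO2, hO3, hO4, hO5, hO6, hO7⟩
  exact ⟨h1, h2, z, hz1, hz2, hz3, O, hO1,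
    fun X hX hx => xFam_mono h (hO2 X hX hx), fun X hX hx => xFam_mono h (hO3 X hX hx),
    hO4, hO5, hO6, hO7⟩

lemma star_le_succ (F : Set (MB.MarkedHypergraph V × V)) (r : ℕ) :
    MB.star F r ⊆ MB.star F (r + 1) := by
  induction r with
  | zero => exact Set.subset_union_left
  | succ n ih =>
    show F ∪ MB.obs (MB.star F n) ⊆ F ∪ MB.obs (MB.star F (n+1))
    exact Set.union_subset_union_right F (obs_mono ih)

lemma pointedIso_id (X : MB.MarkedHypergraph V) (x : V) : MB.PointedIso X x X x := by
  refine ⟨id, Set.injOn_id _, Finset.image_id, fun e _ => by rw [Finset.image_id],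
    fun v _ => Iff.rfl, rfl⟩

lemma mem_free_plus_minus {H : MB.MarkedHypergraph V} {x y v : V} :
    v ∈ ((H.plus x).minus y).verts \ ((H.plus x).minus y).marked ↔
      v ∈ H.verts \ H.marked ∧ v ≠ x ∧ v ≠ y := by
  simp only [MB.MarkedHypergraph.plus, MB.MarkedHypergraph.minus, Finset.mem_sdiff,
    Finset.mem_erase, Finset.mem_insert, not_and, not_or]
  constructor
  · rintro ⟨⟨hvy, hvV⟩, h2⟩
    have := h2 hvy
    push_neg at this
    exact ⟨⟨hvV, this.2⟩, this.1, hvy⟩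
  · rintro ⟨⟨hvV, hvM⟩, hvx, hvy⟩
    exact ⟨⟨hvy, hvV⟩, fun _ => by push_neg; exact ⟨hvx, hvM⟩⟩

lemma free_plus_minus_eq {H : MB.MarkedHypergraph V} {x y : V} :
    ((H.plus x).minus y).verts \ ((H.plus x).minus y).marked =
      ((H.verts \ H.marked).erase x).erase y := by
  ext v
  rw [mem_free_plus_minus]
  simp only [Finset.mem_erase]
  tauto

lemma card_free_plus_minus {H : MB.MarkedHypergraph V} {x y : V}
    (hx : x ∈ H.verts \ H.marked) (hy : y ∈ (H.plus x).verts \ (H.plus x).marked) :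
    (((H.plus x).minus y).verts \ ((H.plus x).minus y).marked).card + 2 =
      (H.verts \ H.marked).card := by
  have hyH : y ∈ H.verts \ H.marked := by
    simp only [MB.MarkedHypergraph.plus, Finset.mem_sdiff, Finset.mem_insert, not_or] at hy
    exact Finset.mem_sdiff.mpr ⟨hy.1, hy.2.2⟩
  have hxy : y ≠ x := by
    simp only [MB.MarkedHypergraph.plus, Finset.mem_sdiff, Finset.mem_insert, not_or] at hy
    exact hy.2.1
  rw [free_plus_minus_eq]
  rw [Finset.card_erase_of_mem (Finset.mem_erase.mpr ⟨hxy, hyH⟩),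
    Finset.card_erase_of_mem hx]
  have h2 : 2 ≤ (H.verts \ H.marked).card := by
    have : ({y, x} : Finset V) ⊆ H.verts \ H.marked := by
      intro v hv
      simp only [Finset.mem_insert, Finset.mem_singleton] at hv
      rcases hv with rfl | rfl
      · exact hyH
      · exact hx
    calc 2 = ({y, x} : Finset V).card := by rw [Finset.card_insert_of_notMem (by simp [hxy]), Finset.card_singleton]
    _ ≤ _ := Finset.card_le_card this
  omega

end Aux
section Aux2
open MB MB.MarkedHypergraph
variable {V : Type} [DecidableEq V]

lemma pointedIso_comp {A B C : MB.MarkedHypergraph V} {a b c : V}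
    (h1 : MB.PointedIso A a B b) (h2 : MB.PointedIso B b C c) : MB.PointedIso A a C c := by
  obtain ⟨φ, hinj1, himg1, hedge1, hmark1, hpt1⟩ := h1
  obtain ⟨χ, hinj2, himg2, hedge2, hmark2, hpt2⟩ := h2
  have hmaps : ∀ v ∈ A.verts, φ v ∈ B.verts := by
    intro v hv
    rw [← himg1]
    exact Finset.mem_image_of_mem φ hv
  refine ⟨χ ∘ φ, ?_, ?_, ?_, ?_, ?_⟩
  · exact hinj2.comp hinj1 (fun v hv => hmaps v hv)
  · rw [← Finset.image_image, himg1, himg2]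
  · intro e he
    rw [hedge1 e he]
    have : e.image φ ⊆ B.verts := by
      intro v hv
      obtain ⟨u, hu, rfl⟩ := Finset.mem_image.mp hv
      exact hmaps u (he hu)
    rw [hedge2 _ this, Finset.image_image]
  · intro v hv
    rw [hmark1 v hv, hmark2 _ (hmaps v hv)]
    rfl
  · show χ (φ a) = c
    rw [hpt1, hpt2]

lemma obs_iso_closed {G : Set (MB.MarkedHypergraph V × V)} {D X : MB.MarkedHypergraph V}
    {d x : V} (hD : (D, d) ∈ MB.obs G) (hXv : X.IsValid) (hx : x ∈ X.verts)
    (hiso : MB.PointedIso X x D d) : (X, x) ∈ MB.obs G := by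
  obtain ⟨φ, hinj, himg, hedge, hmark, hpt⟩ := hiso
  obtain ⟨hdv, hdm, z', hz'v, hz'm, hz'd, O', hO'vs, hO'x, hO'nx, hcovV, hcovE, hcovM,
    hinterD⟩ := hD
  haveI : Nonempty V := ⟨x⟩
  set ψ : V → V := Function.invFunOn φ ↑X.verts with hψdef
  have hmapsφ : ∀ v ∈ X.verts, φ v ∈ D.verts := by
    intro v hv; rw [← himg]; exact Finset.mem_image_of_mem φ hv
  have hψφ : ∀ u ∈ X.verts, ψ (φ u) = u := fun u hu => hinj.leftInvOn_invFunOn hu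
  have hexist : ∀ v ∈ D.verts, ∃ u ∈ (↑X.verts : Set V), φ u = v := by
    intro v hv
    rw [← himg] at hv
    obtain ⟨u, hu, rfl⟩ := Finset.mem_image.mp hv
    exact ⟨u, hu, rfl⟩
  have hψX : ∀ v ∈ D.verts, ψ v ∈ X.verts := fun v hv =>
    Function.invFunOn_mem (hexist v hv)
  have hφψ : ∀ v ∈ D.verts, φ (ψ v) = v := fun v hv =>
    Function.invFunOn_eq (hexist v hv)
  have hmemψ : ∀ (S : Finset V), S ⊆ D.verts → ∀ v : V,
      (v ∈ S.image ψ ↔ v ∈ X.verts ∧ φ v ∈ S) := by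
    intro S hS v
    constructor
    · intro hv
      obtain ⟨u, hu, rfl⟩ := Finset.mem_image.mp hv
      refine ⟨hψX u (hS hu), ?_⟩
      rw [hφψ u (hS hu)]; exact hu
    · rintro ⟨hvX, hφv⟩
      exact Finset.mem_image.mpr ⟨φ v, hφv, hψφ v hvX⟩
  have himgφψ : ∀ (S : Finset V), S ⊆ D.verts → (S.image ψ).image φ = S := by
    intro S hS
    rw [Finset.image_image]
    calc S.image (φ ∘ ψ) = S.image id := Finset.image_congr (fun v hv => hφψ v (hS hv))
    _ = S := Finset.image_id
  have himgψφ : ∀ (S : Finset V), S ⊆ X.verts → (S.image φ).image ψ = S := by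
    intro S hS
    rw [Finset.image_image]
    calc S.image (ψ ∘ φ) = S.image id := Finset.image_congr (fun v hv => hψφ v (hS hv))
    _ = S := Finset.image_id
  have hDedge : ∀ e ∈ D.edges, e ⊆ D.verts := by
    intro e he
    obtain ⟨Y, hY, heY⟩ := hcovE e he
    obtain ⟨hYval, hYsub⟩ := hO'vs Y hY
    exact ((hYval.2.1 e heY).1).trans hYsub.1
  have hDmarked : D.marked ⊆ D.verts := by
    intro m hm
    obtain ⟨Y, hY, hmY⟩ := hcovM m hm
    obtain ⟨hYval, hYsub⟩ := hO'vs Y hY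
    exact hYsub.1 (hYval.2.2 hmY)
  have hψd : ψ d = x := by rw [← hpt, hψφ x hx]
  -- the pullback operation
  set pull : MB.MarkedHypergraph V → MB.MarkedHypergraph V := fun Y =>
    ⟨Y.verts.image ψ, Y.edges.image (fun e => e.image ψ), Y.marked.image ψ⟩ with hpulldef
  -- generic facts about pullbacks of subhypergraphs of D
  have hpullVerts : ∀ Y : MB.MarkedHypergraph V, Y.verts ⊆ D.verts →
      (pull Y).verts ⊆ X.verts := by
    intro Y hYv v hv
    exact ((hmemψ Y.verts hYv v).mp hv).1
  have hpullEdges : ∀ Y : MB.MarkedHypergraph V, Y.edges ⊆ D.edges →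
      (pull Y).edges ⊆ X.edges := by
    intro Y hYe e he
    obtain ⟨e₁, he₁, rfl⟩ := Finset.mem_image.mp he
    have he₁D : e₁ ⊆ D.verts := hDedge e₁ (hYe he₁)
    have hsub : e₁.image ψ ⊆ X.verts := by
      intro v hv
      exact ((hmemψ e₁ he₁D v).mp hv).1
    rw [hedge _ hsub, himgφψ e₁ he₁D]
    exact hYe he₁
  have hpullIso : ∀ Y : MB.MarkedHypergraph V, Y.verts ⊆ D.verts → Y.edges ⊆ D.edges →
      Y.marked ⊆ D.verts → ∀ w ∈ Y.verts, MB.PointedIso (pull Y) (ψ w) Y w := by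
    intro Y hYv hYe hYm w hw
    refine ⟨φ, ?_, ?_, ?_, ?_, ?_⟩
    · exact hinj.mono (fun v hv => hpullVerts Y hYv hv)
    · show ((Y.verts.image ψ).image φ) = Y.verts
      exact himgφψ Y.verts hYv
    · intro e he
      constructor
      · intro he'
        obtain ⟨e₁, he₁, rfl⟩ := Finset.mem_image.mp he'
        rw [himgφψ e₁ (hDedge e₁ (hYe he₁))]
        exact he₁
      · intro he'
        have : e = (e.image φ).image ψ := (himgψφ e (fun v hv => hpullVerts Y hYv (he hv))).symm
        rw [this]
        exact Finset.mem_image.mpr ⟨e.image φ, he', rfl⟩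
    · intro v hv
      have hvX : v ∈ X.verts := hpullVerts Y hYv hv
      show v ∈ Y.marked.image ψ ↔ φ v ∈ Y.marked
      rw [hmemψ Y.marked hYm v]
      exact ⟨fun h => h.2, fun h => ⟨hvX, h⟩⟩
    · exact hφψ w (hYv hw)
  -- now assemble the obs structure for (X, x)
  refine ⟨hx, ?_, ψ z', hψX z' hz'v, ?_, ?_, pull '' O', ?_, ?_, ?_, ?_, ?_, ?_, ?_⟩
  · intro h
    exact hdm (hpt ▸ (hmark x hx).mp h)
  · intro h
    exact hz'm ((hφψ z' hz'v) ▸ (hmark _ (hψX z' hz'v)).mp h)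
  · intro h
    apply hz'd
    rw [← hφψ z' hz'v, h, hpt]
  · -- validity and subhypergraph
    rintro m ⟨Y, hY, rfl⟩
    obtain ⟨hYval, hYsub⟩ := hO'vs Y hY
    have hYmD : Y.marked ⊆ D.verts := fun v hv => hYsub.1 (hYval.2.2 hv)
    constructor
    · refine ⟨hYval.1.image ψ, ?_, ?_⟩
      · intro e he
        obtain ⟨e₁, he₁, rfl⟩ := Finset.mem_image.mp he
        obtain ⟨h1, h2⟩ := hYval.2.1 e₁ he₁
        exact ⟨Finset.image_subset_image h1, h2.image ψ⟩
      · exact Finset.image_subset_image hYval.2.2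
    · refine ⟨hpullVerts Y hYsub.1, hpullEdges Y hYsub.2.1, ?_⟩
      show Y.marked.image ψ = (Y.verts.image ψ) ∩ X.marked
      ext v
      rw [hmemψ Y.marked hYmD v, Finset.mem_inter, hmemψ Y.verts hYsub.1 v]
      constructor
      · rintro ⟨hvX, hφm⟩
        have hφD : φ v ∈ D.marked := by
          rw [hYsub.2.2] at hφm
          exact (Finset.mem_inter.mp hφm).2
        exact ⟨⟨hvX, hYval.2.2 hφm⟩, (hmark v hvX).mpr hφD⟩
      · rintro ⟨⟨hvX, hφv⟩, hvM⟩
        refine ⟨hvX, ?_⟩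
        rw [hYsub.2.2]
        exact Finset.mem_inter.mpr ⟨hφv, (hmark v hvX).mp hvM⟩
  · -- members containing x
    rintro m ⟨Y, hY, rfl⟩ hxm
    obtain ⟨hYval, hYsub⟩ := hO'vs Y hY
    have hdY : d ∈ Y.verts := by
      have := (hmemψ Y.verts hYsub.1 x).mp hxm
      rw [hpt] at this
      exact this.2
    obtain ⟨hval', hsub', hz'mem, p, hp, hiso'⟩ := hO'x Y hY hdY
    have hpulleq : (pull Y).plus x = pull (Y.plus d) := by
      show (⟨Y.verts.image ψ, Y.edges.image _, insert x (Y.marked.image ψ)⟩ :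
        MB.MarkedHypergraph V) = ⟨Y.verts.image ψ, Y.edges.image _, (insert d Y.marked).image ψ⟩
      rw [Finset.image_insert, hψd]
    have hYdm : (Y.plus d).marked ⊆ D.verts := by
      show insert d Y.marked ⊆ D.verts
      intro v hv
      rcases Finset.mem_insert.mp hv with rfl | hv'
      · exact hdv
      · exact hYsub.1 (hYval.2.2 hv')
    refine ⟨?_, ?_, ?_, p, hp, ?_⟩
    · -- validity of (pull Y).plus x
      rw [hpulleq]
      refine ⟨hval'.1.image ψ, ?_, ?_⟩
      · intro e he
        obtain ⟨e₁, he₁, rfl⟩ := Finset.mem_image.mp he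
        obtain ⟨h1, h2⟩ := hval'.2.1 e₁ he₁
        exact ⟨Finset.image_subset_image h1, h2.image ψ⟩
      · exact Finset.image_subset_image hval'.2.2
    · -- (pull Y).plus x IsSub X.plus x
      refine ⟨hpullVerts Y hYsub.1, hpullEdges Y hYsub.2.1, ?_⟩
      show insert x (Y.marked.image ψ) = (Y.verts.image ψ) ∩ insert x X.marked
      have hYm' : insert d Y.marked = Y.verts ∩ insert d D.marked := hsub'.2.2
      ext v
      rw [Finset.mem_insert, Finset.mem_inter, Finset.mem_insert,
        hmemψ Y.marked (fun u hu => hYsub.1 (hYval.2.2 hu)) v,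
        hmemψ Y.verts hYsub.1 v]
      constructor
      · rintro (rfl | ⟨hvX, hφm⟩)
        · exact ⟨⟨hx, hpt ▸ hdY⟩, Or.inl rfl⟩
        · have hφD : φ v ∈ D.marked := by
            rw [hYsub.2.2] at hφm
            exact (Finset.mem_inter.mp hφm).2
          exact ⟨⟨hvX, hYval.2.2 hφm⟩, Or.inr ((hmark v hvX).mpr hφD)⟩
      · rintro ⟨⟨hvX, hφv⟩, rfl | hvM⟩
        · exact Or.inl rfl
        · have : φ v ∈ insert d Y.marked := by
            rw [hYm']
            exact Finset.mem_inter.mpr ⟨hφv, Finset.mem_insert_of_mem ((hmark v hvX).mp hvM)⟩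
          rcases Finset.mem_insert.mp this with heq | hm'
          · left
            have : ψ (φ v) = ψ d := by rw [heq]
            rwa [hψφ v hvX, hψd] at this
          · exact Or.inr ⟨hvX, hm'⟩
    · -- z membership
      show ψ z' ∈ (Y.verts.image ψ)
      rw [hmemψ Y.verts hYsub.1, hφψ z' hz'v]
      exact ⟨hψX z' hz'v, hz'mem⟩
    · -- iso
      have h1 : MB.PointedIso (pull (Y.plus d)) (ψ z') (Y.plus d) z' :=
        hpullIso (Y.plus d) hYsub.1 hYsub.2.1 hYdm z' hz'mem
      rw [hpulleq]
      exact pointedIso_comp h1 hiso'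
  · -- members not containing x
    rintro m ⟨Y, hY, rfl⟩ hxm
    obtain ⟨hYval, hYsub⟩ := hO'vs Y hY
    have hdY : d ∉ Y.verts := by
      intro hdY
      apply hxm
      rw [hmemψ Y.verts hYsub.1 x, hpt]
      exact ⟨hx, hdY⟩
    obtain ⟨hval', hsub', hz'mem, p, hp, hiso'⟩ := hO'nx Y hY hdY
    have hYmD : Y.marked ⊆ D.verts := fun v hv => hYsub.1 (hYval.2.2 hv)
    refine ⟨?_, ?_, ?_, p, hp, ?_⟩
    · refine ⟨hYval.1.image ψ, ?_, ?_⟩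
      · intro e he
        obtain ⟨e₁, he₁, rfl⟩ := Finset.mem_image.mp he
        obtain ⟨h1, h2⟩ := hYval.2.1 e₁ he₁
        exact ⟨Finset.image_subset_image h1, h2.image ψ⟩
      · exact Finset.image_subset_image hYval.2.2
    · refine ⟨hpullVerts Y hYsub.1, hpullEdges Y hYsub.2.1, ?_⟩
      show Y.marked.image ψ = (Y.verts.image ψ) ∩ X.marked
      ext v
      rw [hmemψ Y.marked hYmD v, Finset.mem_inter, hmemψ Y.verts hYsub.1 v]
      constructor
      · rintro ⟨hvX, hφm⟩
        have hφD : φ v ∈ D.marked := by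
          rw [hYsub.2.2] at hφm
          exact (Finset.mem_inter.mp hφm).2
        exact ⟨⟨hvX, hYval.2.2 hφm⟩, (hmark v hvX).mpr hφD⟩
      · rintro ⟨⟨hvX, hφv⟩, hvM⟩
        refine ⟨hvX, ?_⟩
        rw [hYsub.2.2]
        exact Finset.mem_inter.mpr ⟨hφv, (hmark v hvX).mp hvM⟩
    · show ψ z' ∈ (Y.verts.image ψ)
      rw [hmemψ Y.verts hYsub.1, hφψ z' hz'v]
      exact ⟨hψX z' hz'v, hz'mem⟩
    · exact pointedIso_comp (hpullIso Y hYsub.1 hYsub.2.1 hYmD z' hz'mem) hiso'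
  · -- vertex coverage
    intro v hv
    obtain ⟨Y, hY, hvY⟩ := hcovV (φ v) (hmapsφ v hv)
    refine ⟨pull Y, ⟨Y, hY, rfl⟩, ?_⟩
    rw [hmemψ Y.verts (hO'vs Y hY).2.1 v]
    exact ⟨hv, hvY⟩
  · -- edge coverage
    intro e he
    have heX : e ⊆ X.verts := (hXv.2.1 e he).1
    obtain ⟨Y, hY, heY⟩ := hcovE (e.image φ) ((hedge e heX).mp he)
    refine ⟨pull Y, ⟨Y, hY, rfl⟩, ?_⟩
    show e ∈ Y.edges.image (fun e => e.image ψ)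
    rw [← himgψφ e heX]
    exact Finset.mem_image.mpr ⟨e.image φ, heY, rfl⟩
  · -- marked coverage
    intro m hm
    have hmX : m ∈ X.verts := hXv.2.2 hm
    obtain ⟨Y, hY, hmY⟩ := hcovM (φ m) ((hmark m hmX).mp hm)
    refine ⟨pull Y, ⟨Y, hY, rfl⟩, ?_⟩
    show m ∈ Y.marked.image ψ
    rw [hmemψ Y.marked (fun v hv => (hO'vs Y hY).2.1 ((hO'vs Y hY).1.2.2 hv)) m]
    exact ⟨hmX, hmY⟩
  · -- empty intersection
    rw [Set.eq_empty_iff_forall_notMem]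
    rintro v ⟨hv1, hv2, hv3⟩
    have hvX : v ∈ X.verts := hv1
    have hφvD : φ v ∈ D.verts := hmapsφ v hvX
    have : φ v ∈ MB.inter ((D.plus d).plus z') O' := by
      refine ⟨hφvD, ?_, ?_⟩
      · show φ v ∉ insert z' (insert d D.marked)
        intro h
        apply hv2
        show v ∈ insert (ψ z') (insert x X.marked)
        rcases Finset.mem_insert.mp h with heq | h'
        · exact Finset.mem_insert.mpr (Or.inl (by rw [← heq, hψφ v hvX]))
        · rcases Finset.mem_insert.mp h' with heq | h''
          · exact Finset.mem_insert.mpr (Or.inr (Finset.mem_insert.mpr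
              (Or.inl (hinj hvX hx (by rw [heq, hpt])))))
          · exact Finset.mem_insert.mpr (Or.inr (Finset.mem_insert.mpr
              (Or.inr ((hmark v hvX).mpr h''))))
      · intro Y hY
        have := hv3 (pull Y) ⟨Y, hY, rfl⟩
        exact ((hmemψ Y.verts (hO'vs Y hY).2.1 v).mp this).2
    rw [hinterD] at this
    exact this

end Aux2
section Aux3
open MB MB.MarkedHypergraph
variable {V : Type} [DecidableEq V]

lemma J_succ (F : Set (MB.MarkedHypergraph V × V)) (r : ℕ) (H : MB.MarkedHypergraph V) :
    MB.J F (r + 1) H ↔ ∀ x ∈ H.verts \ H.marked,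
      ∃ y ∈ MB.inter (H.plus x) (MB.xFam F H x), MB.J F r ((H.plus x).minus y) :=
  Iff.rfl

lemma J_zero (F : Set (MB.MarkedHypergraph V × V)) (H : MB.MarkedHypergraph V) :
    MB.J F 0 H := trivial

lemma star_succ (F : Set (MB.MarkedHypergraph V × V)) (r : ℕ) :
    MB.star F (r + 1) = F ∪ MB.obs (MB.star F r) := rfl

lemma free_plus {H : MB.MarkedHypergraph V} {z : V} :
    (H.plus z).verts \ (H.plus z).marked = (H.verts \ H.marked).erase z := by
  ext v
  simp only [MB.MarkedHypergraph.plus, Finset.mem_sdiff, Finset.mem_erase, Finset.mem_insert,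
    not_or]
  tauto

lemma sub_of_subK_notMem {H A : MB.MarkedHypergraph V} {x y : V}
    (hsub : A.IsSub ((H.plus x).minus y)) (hxA : x ∉ A.verts) : A.IsSub H := by
  obtain ⟨hv, he, hm⟩ := hsub
  have hyA : y ∉ A.verts := fun h => (Finset.mem_erase.mp (hv h)).1 rfl
  refine ⟨fun v hv' => (Finset.mem_erase.mp (hv hv')).2, fun e he' => (Finset.mem_filter.mp (he he')).1, ?_⟩
  rw [hm]
  show A.verts ∩ (insert x H.marked).erase y = A.verts ∩ H.marked
  ext v
  simp only [Finset.mem_inter, Finset.mem_erase, Finset.mem_insert]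
  constructor
  · rintro ⟨h1, _, rfl | h3⟩
    · exact absurd h1 hxA
    · exact ⟨h1, h3⟩
  · rintro ⟨h1, h2⟩
    exact ⟨h1, fun h => hyA (h ▸ h1), Or.inr h2⟩

end Aux3
section Aux4
open MB MB.MarkedHypergraph
variable {V : Type} [DecidableEq V]

/-- Unmark the vertex `x`. -/
def adjx (x : V) (A : MB.MarkedHypergraph V) : MB.MarkedHypergraph V :=
  ⟨A.verts, A.edges, A.marked.erase x⟩

@[simp] lemma adjx_verts (x : V) (A : MB.MarkedHypergraph V) : (adjx x A).verts = A.verts := rfl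
@[simp] lemma adjx_edges (x : V) (A : MB.MarkedHypergraph V) : (adjx x A).edges = A.edges := rfl
@[simp] lemma adjx_marked (x : V) (A : MB.MarkedHypergraph V) :
    (adjx x A).marked = A.marked.erase x := rfl

lemma step_aux (F : Set (MB.MarkedHypergraph V × V)) (r : ℕ)
    (IH : ∀ H : MB.MarkedHypergraph V, 2 * (r + 1) ≤ (H.verts \ H.marked).card →
      (MB.J F (r + 1) H ↔ MB.J (MB.star F r) 1 H))
    (H : MB.MarkedHypergraph V) (hcard : 2 * (r + 2) ≤ (H.verts \ H.marked).card) :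
    MB.J F (r + 2) H ↔ MB.J (MB.star F (r + 1)) 1 H := by
  classical
  constructor
  · -- forward direction
    intro hJ
    rw [J_succ]
    intro x hx
    obtain ⟨y, hy, hJr⟩ := (J_succ F (r + 1) H).mp hJ x hx
    have hyfree : y ∈ (H.plus x).verts \ (H.plus x).marked :=
      Finset.mem_sdiff.mpr ⟨hy.1, hy.2.1⟩
    have hKcard : 2 * (r + 1) ≤
        ((((H.plus x).minus y).verts) \ (((H.plus x).minus y).marked)).card := by
      have := card_free_plus_minus hx hyfree
      omega
    have hJG : MB.J (MB.star F r) 1 ((H.plus x).minus y) := (IH _ hKcard).mp hJr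
    refine ⟨y, ⟨hy.1, hy.2.1, ?_⟩, J_zero _ _⟩
    intro X hX
    obtain ⟨hXval, hXsub, hxX, p, hp, hisoX⟩ := hX
    rcases hp with hpF | hpO
    · exact hy.2.2 X ⟨hXval, hXsub, hxX, p, hpF, hisoX⟩
    · obtain ⟨D, dd⟩ := p
      have hobsX : (X, x) ∈ MB.obs (MB.star F r) := obs_iso_closed hpO hXval hxX hisoX
      obtain ⟨-, hxmX, z, hzX, hzmX, hzx, O, hOvs, hOx, hOnx, hcovV, hcovE, hcovM, hinterX⟩ :=
        hobsX
      by_contra hyX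
      have hzH : z ∈ H.verts \ H.marked := by
        refine Finset.mem_sdiff.mpr ⟨hXsub.1 hzX, fun h => hzmX ?_⟩
        rw [hXsub.2.2]
        exact Finset.mem_inter.mpr ⟨hzX, h⟩
      have hzK : z ∈ ((H.plus x).minus y).verts \ ((H.plus x).minus y).marked :=
        mem_free_plus_minus.mpr ⟨hzH, hzx, fun h => hyX (h ▸ hzX)⟩
      obtain ⟨w, hw, -⟩ := (J_succ (MB.star F r) 0 _).mp hJG z hzK
      have hwO : ∀ m ∈ O, w ∈ m.verts := by
        intro m hm
        by_cases hxm : x ∈ m.verts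
        · obtain ⟨h1val, h1sub, h1z, q, hq, h1iso⟩ := hOx m hm hxm
          have hsub2 : (m.plus x).IsSub (H.plus x) :=
            isSub_trans h1sub (isSub_plus hXsub hxX)
          have hyNot : y ∉ (m.plus x).verts := fun h => hyX (h1sub.1 h)
          have hsub3 : (m.plus x).IsSub ((H.plus x).minus y) :=
            isSub_minus hsub2 hyNot (fun e he => (h1val.2.1 e he).1)
          exact hw.2.2 (m.plus x) ⟨h1val, hsub3, h1z, q, hq, h1iso⟩
        · obtain ⟨h1val, h1sub, h1z, q, hq, h1iso⟩ := hOnx m hm hxm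
          have hsub2 : m.IsSub (H.plus x) :=
            isSub_plus_of_notMem (isSub_trans h1sub hXsub) hxm
          have hyNot : y ∉ m.verts := fun h => hyX (h1sub.1 h)
          have hsub3 : m.IsSub ((H.plus x).minus y) :=
            isSub_minus hsub2 hyNot (fun e he => (h1val.2.1 e he).1)
          exact hw.2.2 m ⟨h1val, hsub3, h1z, q, hq, h1iso⟩
      obtain ⟨m0, hm0, hxm0⟩ := hcovV x hxX
      have hwX : w ∈ X.verts := (hOvs m0 hm0).2.1 (hwO m0 hm0)
      have hw1 : w ∈ H.verts.erase y := hw.1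
      have hw2 : w ∉ insert z ((insert x H.marked).erase y) := hw.2.1
      have hwz : w ≠ z := fun h => hw2 (Finset.mem_insert.mpr (Or.inl h))
      have hwy : w ≠ y := (Finset.mem_erase.mp hw1).1
      have hwxM : w ∉ insert x H.marked := fun h =>
        hw2 (Finset.mem_insert.mpr (Or.inr (Finset.mem_erase.mpr ⟨hwy, h⟩)))
      have hwfin : w ∈ MB.inter ((X.plus x).plus z) O := by
        refine ⟨hwX, ?_, hwO⟩
        show w ∉ insert z (insert x X.marked)
        intro h
        rcases Finset.mem_insert.mp h with h' | h'
        · exact hwz h'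
        · rcases Finset.mem_insert.mp h' with h'' | h''
          · exact hwxM (Finset.mem_insert.mpr (Or.inl h''))
          · rw [hXsub.2.2] at h''
            exact hwxM (Finset.mem_insert.mpr (Or.inr (Finset.mem_inter.mp h'').2))
      rw [hinterX] at hwfin
      exact hwfin
  · -- backward direction
    intro hJ
    rw [J_succ]
    intro x hx
    obtain ⟨y, hy, -⟩ := (J_succ (MB.star F (r + 1)) 0 H).mp hJ x hx
    have hFsub : F ⊆ MB.star F (r + 1) := by
      rw [star_succ]; exact Set.subset_union_left
    have hyF : y ∈ MB.inter (H.plus x) (MB.xFam F H x) :=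
      ⟨hy.1, hy.2.1, fun X hX => hy.2.2 X (xFam_mono hFsub hX)⟩
    refine ⟨y, hyF, ?_⟩
    have hyfree : y ∈ (H.plus x).verts \ (H.plus x).marked :=
      Finset.mem_sdiff.mpr ⟨hy.1, hy.2.1⟩
    have hKcard : 2 * (r + 1) ≤
        ((((H.plus x).minus y).verts) \ (((H.plus x).minus y).marked)).card := by
      have := card_free_plus_minus hx hyfree
      omega
    rw [IH _ hKcard, J_succ]
    intro z hz
    set K := (H.plus x).minus y with hK
    set 𝒳 := MB.xFam (MB.star F r) K z with h𝒳
    rcases Set.eq_empty_or_nonempty (MB.inter (K.plus z) 𝒳) with hemp | ⟨w, hw⟩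
    swap
    · exact ⟨w, hw, J_zero _ _⟩
    exfalso
    -- basic facts
    have hxv : x ∈ H.verts := (Finset.mem_sdiff.mp hx).1
    have hxm : x ∉ H.marked := (Finset.mem_sdiff.mp hx).2
    have hyx : y ≠ x := by
      intro h
      exact (Finset.mem_sdiff.mp hyfree).2 (h ▸ Finset.mem_insert_self x H.marked)
    have hzfacts := mem_free_plus_minus.mp hz
    have hzH : z ∈ H.verts \ H.marked := hzfacts.1
    have hzx : z ≠ x := hzfacts.2.1
    have hzy : z ≠ y := hzfacts.2.2
    have hzM : z ∉ H.marked := (Finset.mem_sdiff.mp hzH).2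
    have hcover : ∀ v ∈ (K.plus z).verts \ (K.plus z).marked, ∃ A ∈ 𝒳, v ∉ A.verts := by
      intro v hv
      by_contra hcon
      push_neg at hcon
      have : v ∈ MB.inter (K.plus z) 𝒳 :=
        ⟨(Finset.mem_sdiff.mp hv).1, (Finset.mem_sdiff.mp hv).2, hcon⟩
      rw [hemp] at this
      exact this
    -- facts about members of 𝒳
    have hA_vertsK : ∀ A ∈ 𝒳, A.verts ⊆ H.verts.erase y := fun A hA => hA.2.1.1
    have hA_y : ∀ A ∈ 𝒳, y ∉ A.verts := by
      intro A hA h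
      exact (Finset.mem_erase.mp (hA_vertsK A hA h)).1 rfl
    have hA_marked : ∀ A ∈ 𝒳, A.marked = A.verts ∩ (insert x H.marked).erase y :=
      fun A hA => hA.2.1.2.2
    have hA_edgesK : ∀ A ∈ 𝒳, A.edges ⊆ H.edges := by
      intro A hA e he
      exact (Finset.mem_filter.mp (hA.2.1.2.1 he)).1
    have hA_adjm : ∀ A ∈ 𝒳, A.marked.erase x = A.verts ∩ H.marked := by
      intro A hA
      rw [hA_marked A hA]
      ext v
      simp only [Finset.mem_erase, Finset.mem_inter, Finset.mem_insert]
      constructor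
      · rintro ⟨hvx, h1, _, rfl | h3⟩
        · exact absurd rfl hvx
        · exact ⟨h1, h3⟩
      · rintro ⟨h1, h2⟩
        refine ⟨fun h => hxm (h ▸ h2), h1, fun h => ?_, Or.inr h2⟩
        exact (Finset.mem_erase.mp (hA_vertsK A hA h1)).1 h
    -- case split: does some danger contain x?
    by_cases hcaseA : ∃ A ∈ 𝒳, x ∈ A.verts
    · -- case A : build an obstruction pointed at x avoiding y
      obtain ⟨A₀, hA₀, hxA₀⟩ := hcaseA
      set freeS := (K.plus z).verts \ (K.plus z).marked with hfreeS
      have hpickex : ∀ w : V, ∃ A : MB.MarkedHypergraph V,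
          (w ∈ freeS → A ∈ 𝒳 ∧ w ∉ A.verts) ∧ (w ∉ freeS → A = A₀) := by
        intro w
        by_cases hwS : w ∈ freeS
        · obtain ⟨A, hA, hwA⟩ := hcover w hwS
          exact ⟨A, fun _ => ⟨hA, hwA⟩, fun h => absurd hwS h⟩
        · exact ⟨A₀, fun h => absurd h hwS, fun _ => rfl⟩
      choose pick hpick1 hpick2 using hpickex
      set gens : Set (MB.MarkedHypergraph V) := insert A₀ (pick '' ↑freeS) with hgens
      set D : MB.MarkedHypergraph V :=
        ⟨A₀.verts ∪ freeS.sup (fun w => (pick w).verts),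
         A₀.edges ∪ freeS.sup (fun w => (pick w).edges),
         A₀.marked.erase x ∪ freeS.sup (fun w => (pick w).marked.erase x)⟩ with hD
      have hgen𝒳 : ∀ A ∈ gens, A ∈ 𝒳 := by
        rintro A (rfl | ⟨w, hw', rfl⟩)
        · exact hA₀
        · exact (hpick1 w hw').1
      have hDvIff : ∀ v, v ∈ D.verts ↔ ∃ A ∈ gens, v ∈ A.verts := by
        intro v
        rw [hD]
        show v ∈ A₀.verts ∪ freeS.sup (fun w => (pick w).verts) ↔ _
        rw [Finset.mem_union, Finset.mem_sup]
        constructor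
        · rintro (h | ⟨w, hw', h⟩)
          · exact ⟨A₀, Set.mem_insert _ _, h⟩
          · exact ⟨pick w, Set.mem_insert_of_mem _ ⟨w, hw', rfl⟩, h⟩
        · rintro ⟨A, (rfl | ⟨w, hw', rfl⟩), h⟩
          · exact Or.inl h
          · exact Or.inr ⟨w, hw', h⟩
      have hDeIff : ∀ e, e ∈ D.edges ↔ ∃ A ∈ gens, e ∈ A.edges := by
        intro e
        rw [hD]
        show e ∈ A₀.edges ∪ freeS.sup (fun w => (pick w).edges) ↔ _
        rw [Finset.mem_union, Finset.mem_sup]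
        constructor
        · rintro (h | ⟨w, hw', h⟩)
          · exact ⟨A₀, Set.mem_insert _ _, h⟩
          · exact ⟨pick w, Set.mem_insert_of_mem _ ⟨w, hw', rfl⟩, h⟩
        · rintro ⟨A, (rfl | ⟨w, hw', rfl⟩), h⟩
          · exact Or.inl h
          · exact Or.inr ⟨w, hw', h⟩
      have hDmIff : ∀ m, m ∈ D.marked ↔ ∃ A ∈ gens, m ∈ A.marked.erase x := by
        intro m
        rw [hD]
        show m ∈ A₀.marked.erase x ∪ freeS.sup (fun w => (pick w).marked.erase x) ↔ _
        rw [Finset.mem_union, Finset.mem_sup]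
        constructor
        · rintro (h | ⟨w, hw', h⟩)
          · exact ⟨A₀, Set.mem_insert _ _, h⟩
          · exact ⟨pick w, Set.mem_insert_of_mem _ ⟨w, hw', rfl⟩, h⟩
        · rintro ⟨A, (rfl | ⟨w, hw', rfl⟩), h⟩
          · exact Or.inl h
          · exact Or.inr ⟨w, hw', h⟩
      have hgenD : ∀ A ∈ gens, A.verts ⊆ D.verts ∧ A.edges ⊆ D.edges ∧
          A.marked.erase x ⊆ D.marked := by
        intro A hA
        exact ⟨fun v hv => (hDvIff v).mpr ⟨A, hA, hv⟩,
          fun e he => (hDeIff e).mpr ⟨A, hA, he⟩,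
          fun m hm => (hDmIff m).mpr ⟨A, hA, hm⟩⟩
      have hDmarked : D.marked = D.verts ∩ H.marked := by
        ext v
        rw [hDmIff v, Finset.mem_inter, hDvIff v]
        constructor
        · rintro ⟨A, hA, h⟩
          rw [hA_adjm A (hgen𝒳 A hA)] at h
          exact ⟨⟨A, hA, (Finset.mem_inter.mp h).1⟩, (Finset.mem_inter.mp h).2⟩
        · rintro ⟨⟨A, hA, h⟩, hM⟩
          refine ⟨A, hA, ?_⟩
          rw [hA_adjm A (hgen𝒳 A hA)]
          exact Finset.mem_inter.mpr ⟨h, hM⟩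
      have hDvertsH : D.verts ⊆ H.verts.erase y := by
        intro v hv
        obtain ⟨A, hA, hvA⟩ := (hDvIff v).mp hv
        exact hA_vertsK A (hgen𝒳 A hA) hvA
      have hxD : x ∈ D.verts := (hDvIff x).mpr ⟨A₀, Set.mem_insert _ _, hxA₀⟩
      have hxDm : x ∉ D.marked := by
        rw [hDmarked]
        exact fun h => hxm (Finset.mem_inter.mp h).2
      have hzD : z ∈ D.verts := (hDvIff z).mpr ⟨A₀, Set.mem_insert _ _, hA₀.2.2.1⟩
      have hzDm : z ∉ D.marked := by
        rw [hDmarked]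
        exact fun h => hzM (Finset.mem_inter.mp h).2
      have hDvalid : D.IsValid := by
        refine ⟨⟨z, hzD⟩, ?_, ?_⟩
        · intro e he
          obtain ⟨A, hA, heA⟩ := (hDeIff e).mp he
          obtain ⟨h1, h2⟩ := (hgen𝒳 A hA).1.2.1 e heA
          exact ⟨h1.trans (hgenD A hA).1, h2⟩
        · rw [hDmarked]; exact Finset.inter_subset_left
      have hDsubH : D.IsSub H := by
        refine ⟨hDvertsH.trans (Finset.erase_subset y H.verts), ?_, hDmarked⟩
        intro e he
        obtain ⟨A, hA, heA⟩ := (hDeIff e).mp he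
        exact hA_edgesK A (hgen𝒳 A hA) heA
      -- the key per-member conditions
      have key : ∀ A ∈ gens, ((adjx x A).IsValid ∧ (adjx x A).IsSub D) ∧
          (x ∈ (adjx x A).verts →
            (adjx x A).plus x ∈ MB.xFam (MB.star F r) (D.plus x) z) ∧
          (x ∉ (adjx x A).verts → adjx x A ∈ MB.xFam (MB.star F r) D z) := by
        intro A hA
        have hA𝒳 := hgen𝒳 A hA
        obtain ⟨hval, hsub, hzA, p, hp, hiso⟩ := hA𝒳
        obtain ⟨hvD, heD, hmD⟩ := hgenD A hA
        have hmarkedD : A.verts ∩ H.marked = A.verts ∩ D.marked := by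
          ext v
          rw [hDmarked]
          simp only [Finset.mem_inter]
          exact ⟨fun h => ⟨h.1, hvD h.1, h.2⟩, fun h => ⟨h.1, h.2.2⟩⟩
        refine ⟨⟨⟨hval.1, hval.2.1, (Finset.erase_subset x A.marked).trans hval.2.2⟩, ?_⟩,
          ?_, ?_⟩
        · refine ⟨hvD, heD, ?_⟩
          show A.marked.erase x = A.verts ∩ D.marked
          rw [hA_adjm A (hgen𝒳 A hA), hmarkedD]
        · intro hxA
          have hxAm : x ∈ A.marked := by
            rw [hA_marked A (hgen𝒳 A hA)]
            exact Finset.mem_inter.mpr ⟨hxA,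
              Finset.mem_erase.mpr ⟨fun h => hyx h.symm, Finset.mem_insert_self x _⟩⟩
          have hplus : (adjx x A).plus x = A := by
            show (⟨A.verts, A.edges, insert x (A.marked.erase x)⟩ : MB.MarkedHypergraph V) = A
            rw [Finset.insert_erase hxAm]
          rw [hplus]
          refine ⟨hval, ⟨hvD, heD, ?_⟩, hzA, p, hp, hiso⟩
          show A.marked = A.verts ∩ insert x D.marked
          rw [hA_marked A (hgen𝒳 A hA)]
          ext v
          simp only [Finset.mem_inter, Finset.mem_erase, Finset.mem_insert]
          constructor
          · rintro ⟨h1, h2, rfl | h3⟩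
            · exact ⟨h1, Or.inl rfl⟩
            · refine ⟨h1, Or.inr ?_⟩
              refine hmD ?_
              rw [hA_adjm A (hgen𝒳 A hA)]
              exact Finset.mem_inter.mpr ⟨h1, h3⟩
          · rintro ⟨h1, rfl | h2⟩
            · exact ⟨h1, fun h => hyx h.symm, Or.inl rfl⟩
            · have h2' : v ∈ D.marked := h2
              rw [hDmarked] at h2'
              refine ⟨h1, fun h => ?_, Or.inr (Finset.mem_inter.mp h2').2⟩
              exact (Finset.mem_erase.mp (hA_vertsK A (hgen𝒳 A hA) h1)).1 h
        · intro hxA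
          have hadjeq : adjx x A = A := by
            show (⟨A.verts, A.edges, A.marked.erase x⟩ : MB.MarkedHypergraph V) = A
            rw [Finset.erase_eq_of_notMem (fun h => hxA (hval.2.2 h))]
          rw [hadjeq]
          refine ⟨hval, ⟨hvD, heD, ?_⟩, hzA, p, hp, hiso⟩
          show A.marked = A.verts ∩ D.marked
          rw [← hmarkedD, ← hA_adjm A (hgen𝒳 A hA),
            Finset.erase_eq_of_notMem (fun h => hxA (hval.2.2 h))]
      -- assemble the obstruction
      have hobs : (D, x) ∈ MB.obs (MB.star F r) := by
        refine ⟨hxD, hxDm, z, hzD, hzDm, fun h => hzx h, adjx x '' gens,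
          ?_, ?_, ?_, ?_, ?_, ?_, ?_⟩
        · rintro m ⟨A, hA, rfl⟩; exact (key A hA).1
        · rintro m ⟨A, hA, rfl⟩ hxm'; exact (key A hA).2.1 hxm'
        · rintro m ⟨A, hA, rfl⟩ hxm'; exact (key A hA).2.2 hxm'
        · intro v hv
          obtain ⟨A, hA, hvA⟩ := (hDvIff v).mp hv
          exact ⟨adjx x A, ⟨A, hA, rfl⟩, hvA⟩
        · intro e he
          obtain ⟨A, hA, heA⟩ := (hDeIff e).mp he
          exact ⟨adjx x A, ⟨A, hA, rfl⟩, heA⟩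
        · intro m hm
          obtain ⟨A, hA, hmA⟩ := (hDmIff m).mp hm
          exact ⟨adjx x A, ⟨A, hA, rfl⟩, hmA⟩
        · rw [Set.eq_empty_iff_forall_notMem]
          rintro v ⟨hv1, hv2, hv3⟩
          have hv1' : v ∈ D.verts := hv1
          have hv2' : v ∉ insert z (insert x D.marked) := hv2
          have hvz : v ≠ z := fun h => hv2' (Finset.mem_insert.mpr (Or.inl h))
          have hvx : v ≠ x := fun h => hv2'
            (Finset.mem_insert.mpr (Or.inr (Finset.mem_insert.mpr (Or.inl h))))
          have hvM : v ∉ H.marked := by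
            intro h
            refine hv2' (Finset.mem_insert.mpr (Or.inr (Finset.mem_insert.mpr (Or.inr ?_))))
            rw [hDmarked]
            exact Finset.mem_inter.mpr ⟨hv1', h⟩
          have hvS : v ∈ freeS := by
            rw [hfreeS]
            refine Finset.mem_sdiff.mpr ⟨?_, ?_⟩
            · exact hDvertsH hv1'
            · show v ∉ insert z ((insert x H.marked).erase y)
              intro h
              rcases Finset.mem_insert.mp h with h' | h'
              · exact hvz h'
              · rcases Finset.mem_insert.mp (Finset.mem_erase.mp h').2 with h'' | h''
                · exact hvx h''
                · exact hvM h''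
          have hmem : adjx x (pick v) ∈ adjx x '' gens :=
            ⟨pick v, Set.mem_insert_of_mem _ ⟨v, hvS, rfl⟩, rfl⟩
          exact (hpick1 v hvS).2 (hv3 (adjx x (pick v)) hmem)
      have hDfam : D ∈ MB.xFam (MB.star F (r + 1)) H x := by
        refine ⟨hDvalid, hDsubH, hxD, (D, x), ?_, pointedIso_id D x⟩
        rw [star_succ]
        exact Or.inr hobs
      exact (Finset.mem_erase.mp (hDvertsH (hy.2.2 D hDfam))).1 rfl
    · -- case B : contradict hJ at z
      obtain ⟨y', hy', -⟩ := (J_succ (MB.star F (r + 1)) 0 H).mp hJ z hzH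
      have hXin : ∀ A ∈ 𝒳, A ∈ MB.xFam (MB.star F (r + 1)) H z := by
        intro A hA
        have hxA : x ∉ A.verts := fun h => hcaseA ⟨A, hA, h⟩
        obtain ⟨hval, hsub, hzA, p, hp, hiso⟩ := hA
        exact ⟨hval, sub_of_subK_notMem hsub hxA, hzA, p, star_le_succ F r hp, hiso⟩
      have hfreeKz : ((K.plus z).verts \ (K.plus z).marked).Nonempty := by
        rw [free_plus]
        have h1 : ((K.verts \ K.marked).erase z).card = (K.verts \ K.marked).card - 1 :=
          Finset.card_erase_of_mem hz
        have h2 := card_free_plus_minus hx hyfree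
        rw [← hK] at h2
        refine Finset.card_pos.mp ?_
        omega
      obtain ⟨w₀, hw₀⟩ := hfreeKz
      obtain ⟨A₁, hA₁, -⟩ := hcover w₀ hw₀
      have hy'A : ∀ A ∈ 𝒳, y' ∈ A.verts := fun A hA => hy'.2.2 A (hXin A hA)
      have hy'z : y' ≠ z := fun h => hy'.2.1 (h ▸ Finset.mem_insert_self z H.marked)
      have hy'M : y' ∉ H.marked := fun h => hy'.2.1 (Finset.mem_insert_of_mem h)
      have hy'x : y' ≠ x := fun h => hcaseA ⟨A₁, hA₁, h ▸ hy'A A₁ hA₁⟩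
      have hy'y : y' ≠ y := fun h => hA_y A₁ hA₁ (h ▸ hy'A A₁ hA₁)
      have hy'free : y' ∈ (K.plus z).verts \ (K.plus z).marked := by
        rw [free_plus]
        refine Finset.mem_erase.mpr ⟨hy'z, mem_free_plus_minus.mpr
          ⟨Finset.mem_sdiff.mpr ⟨hy'.1, hy'M⟩, hy'x, hy'y⟩⟩
      obtain ⟨A₂, hA₂, hy'A₂⟩ := hcover y' hy'free
      exact hy'A₂ (hy'A A₂ hA₂)

end Aux4
section Aux5
open MB MB.MarkedHypergraph
variable {V : Type} [DecidableEq V]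

lemma J_iff_star (F : Set (MB.MarkedHypergraph V × V)) :
    ∀ (r : ℕ) (H : MB.MarkedHypergraph V), 2 * (r + 1) ≤ (H.verts \ H.marked).card →
      (MB.J F (r + 1) H ↔ MB.J (MB.star F r) 1 H) := by
  intro r
  induction r with
  | zero => intro H _; exact Iff.rfl
  | succ n ih => intro H hcard; exact step_aux F n ih H hcard

end Aux5
/-- Proposition 1.35: `J_r(ℱ,H) ↔ J_1(ℱ^{*(r-1)},H)`. -/
theorem statement12 {V : Type} [DecidableEq V]
    (F : Set (MB.MarkedHypergraph V × V)) (hF : MB.IsDangerFamily F)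
    (r : ℕ) (hr : 1 ≤ r) :
    ∀ H : MB.MarkedHypergraph V, H.IsValid → 2 * r ≤ (H.verts \ H.marked).card →
      (MB.J F r H ↔ MB.J (MB.star F (r - 1)) 1 H) := by
  intro H _ hcard
  cases r with
  | zero => omega
  | succ s =>
    have hs : s + 1 - 1 = s := rfl
    rw [hs]
    exact J_iff_star F s H hcard
end

section
/- Every marked hypergraph that contains a nunchaku as a subhypergraph is a Maker win. -/
namespace MB

open MarkedHypergraph

variable {V : Type} [DecidableEq V]

variable {V : Type} [DecidableEq V]
theorem trivA : ∀ n (H : MB.MarkedHypergraph V), (H.verts \ H.marked).card = n →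
    (∀ e ∈ H.edges, e ⊆ H.verts) → H.TrivialMakerWin → H.MakerWin := by
  intro n
  induction n using Nat.strong_induction_on with
  | _ n IH =>
    intro H hcard hE htriv
    rw [MB.MarkedHypergraph.MakerWin]
    split
    · exact htriv
    · rename_i hbig
      push_neg at hbig
      obtain ⟨e, he, hce⟩ := htriv
      have hfree : (H.verts \ H.marked).Nonempty := Finset.card_pos.mp (by omega)
      have hx : ∃ x ∈ H.verts \ H.marked, e \ H.marked ⊆ {x} := by
        rcases Finset.eq_empty_or_nonempty (e \ H.marked) with hemp | ⟨z, hz⟩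
        · obtain ⟨x, hx⟩ := hfree
          exact ⟨x, hx, by rw [hemp]; exact Finset.empty_subset _⟩
        · rw [Finset.mem_sdiff] at hz
          refine ⟨z, Finset.mem_sdiff.mpr ⟨hE e he hz.1, hz.2⟩, ?_⟩
          intro v hv
          rw [Finset.mem_singleton]
          by_contra hvz
          have : 2 ≤ (e \ H.marked).card := by
            have : {v, z} ⊆ e \ H.marked := by
              intro w hw
              rcases Finset.mem_insert.mp hw with h | h
              · exact h ▸ hv
              · exact (Finset.mem_singleton.mp h) ▸ Finset.mem_sdiff.mpr hz
            calc 2 = ({v, z} : Finset V).card := (Finset.card_pair hvz).symm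
              _ ≤ _ := Finset.card_le_card this
          omega
      obtain ⟨x, hxf, hsub⟩ := hx
      refine ⟨x, hxf, ?_⟩
      intro y hy
      have hy' : y ∈ H.verts ∧ y ∉ insert x H.marked := by
        simpa [MarkedHypergraph.plus, Finset.mem_sdiff] using hy
      have hyx : y ≠ x := fun h => hy'.2 (by rw [h]; exact Finset.mem_insert_self x H.marked)
      have hym : y ∉ H.marked := fun h => hy'.2 (Finset.mem_insert_of_mem h)
      have hye : y ∉ e := fun hyel =>
        hyx (Finset.mem_singleton.mp (hsub (Finset.mem_sdiff.mpr ⟨hyel, hym⟩)))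
      set H' := (H.plus x).minus y with hH'
      have hE' : ∀ e' ∈ H'.edges, e' ⊆ H'.verts := by
        intro e' he'
        simp only [hH', MarkedHypergraph.plus, MarkedHypergraph.minus, Finset.mem_filter] at he' ⊢
        intro v hv
        exact Finset.mem_erase.mpr ⟨fun h => he'.2 (h ▸ hv), hE e' he'.1 hv⟩
      have htriv' : H'.TrivialMakerWin := by
        refine ⟨e, ?_, ?_⟩
        · simp only [hH', MarkedHypergraph.plus, MarkedHypergraph.minus, Finset.mem_filter]
          exact ⟨he, hye⟩
        · have : e \ H'.marked = ∅ := by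
            rw [Finset.eq_empty_iff_forall_notMem]
            intro v hv
            rw [Finset.mem_sdiff] at hv
            have hvm : v ∉ (insert x H.marked).erase y := hv.2
            have hvy : v ≠ y := fun h => hye (h ▸ hv.1)
            have : v ∉ insert x H.marked := fun h => hvm (Finset.mem_erase.mpr ⟨hvy, h⟩)
            have hvx : v ≠ x := fun h => this (by rw [h]; exact Finset.mem_insert_self x _)
            have hvM : v ∉ H.marked := fun h => this (Finset.mem_insert_of_mem h)
            exact hvx (Finset.mem_singleton.mp (hsub (Finset.mem_sdiff.mpr ⟨hv.1, hvM⟩)))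
          rw [this]; simp
      exact IH _ (hcard ▸ MB.MarkedHypergraph.card_free_lt H x y hy) H' rfl hE' htriv'

theorem nun_win : ∀ L (H : MB.MarkedHypergraph V),
    (∀ e ∈ H.edges, e ⊆ H.verts) → H.marked ⊆ H.verts →
    (∃ N a b, MB.MarkedHypergraph.IsSub N H ∧ MB.IsPathLen N a b (L + 1) ∧
      N.marked = {a, b}) → H.MakerWin := by
  intro L
  induction L with
  | zero =>
    intro H hE hM ⟨N, a, b, hNsub, hpath, hmk⟩
    obtain ⟨hNV, hNE, hNM⟩ := hNsub
    rcases hpath with ⟨h0, _⟩ | ⟨_, hab, e, hedges, hverts, hcard3, hdist, hae, hbe,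
      hinter, hfar, hanot, hbnot⟩
    · omega
    · have he0 : e 0 ∈ H.edges := by
        apply hNE
        rw [hedges]
        exact Finset.mem_image.mpr ⟨0, Finset.mem_range.mpr (by omega), rfl⟩
      have hbe0 : b ∈ e 0 := hbe
      have hmem : ∀ v ∈ e 0, v ∈ N.verts := by
        intro v hv
        rw [hverts]
        exact Finset.mem_biUnion.mpr ⟨0, Finset.mem_range.mpr (by omega), hv⟩
      have hint : N.verts ∩ H.marked = {a, b} := by rw [← hNM, hmk]
      have haM : a ∈ H.marked :=
        (Finset.mem_inter.mp (hint ▸ (by simp : a ∈ ({a, b} : Finset V)))).2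
      have hbM : b ∈ H.marked :=
        (Finset.mem_inter.mp (hint ▸ (by simp : b ∈ ({a, b} : Finset V)))).2
      apply trivA _ H rfl hE
      refine ⟨e 0, he0, ?_⟩
      have hsub : e 0 \ H.marked ⊆ e 0 \ {a, b} := by
        intro v hv
        rw [Finset.mem_sdiff] at hv ⊢
        refine ⟨hv.1, ?_⟩
        intro hv2
        rcases Finset.mem_insert.mp hv2 with h | h
        · exact hv.2 (h ▸ haM)
        · exact hv.2 ((Finset.mem_singleton.mp h) ▸ hbM)
      calc (e 0 \ H.marked).card ≤ (e 0 \ {a, b}).card := Finset.card_le_card hsub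
        _ = (e 0).card - ({a, b} : Finset V).card := by
            apply Finset.card_sdiff_of_subset
            intro v hv
            rcases Finset.mem_insert.mp hv with h | h
            · exact h ▸ hae
            · exact (Finset.mem_singleton.mp h) ▸ hbe0
        _ ≤ 1 := by rw [hcard3 0 (by omega), Finset.card_pair hab]
  | succ L IH =>
    intro H hE hM ⟨N, a, b, hNsub, hpath, hmk⟩
    obtain ⟨hNV, hNE, hNM⟩ := hNsub
    rcases hpath with ⟨h0, _⟩ | ⟨_, hab, e, hedges, hverts, hcard3, hdist, hae, hbe,
      hinter, hfar, hanot, hbnot⟩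
    · omega
    · set M := L + 2 with hM2
      -- basic memberships
      have hmemN : ∀ i, i < M → ∀ v ∈ e i, v ∈ N.verts := by
        intro i hi v hv
        rw [hverts]
        exact Finset.mem_biUnion.mpr ⟨i, Finset.mem_range.mpr hi, hv⟩
      have hedgeH : ∀ i, i < M → e i ∈ H.edges := by
        intro i hi
        exact hNE (hedges ▸ Finset.mem_image.mpr ⟨i, Finset.mem_range.mpr hi, rfl⟩)
      have hint : N.verts ∩ H.marked = {a, b} := by rw [← hNM, hmk]
      have hmarkIff : ∀ v ∈ N.verts, v ∈ H.marked → v = a ∨ v = b := by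
        intro v hv hvm
        have := hint ▸ Finset.mem_inter.mpr ⟨hv, hvm⟩
        rcases Finset.mem_insert.mp this with h | h
        · exact Or.inl h
        · exact Or.inr (Finset.mem_singleton.mp h)
      have haM : a ∈ H.marked :=
        (Finset.mem_inter.mp (hint ▸ (by simp : a ∈ ({a, b} : Finset V)))).2
      have hbM : b ∈ H.marked :=
        (Finset.mem_inter.mp (hint ▸ (by simp : b ∈ ({a, b} : Finset V)))).2
      -- the joint c
      obtain ⟨c, hc⟩ := Finset.card_eq_one.mp (hinter 0 (by omega))
      have hc0 : c ∈ e 0 := (Finset.mem_inter.mp (hc ▸ Finset.mem_singleton_self c)).1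
      have hc1 : c ∈ e 1 := (Finset.mem_inter.mp (hc ▸ Finset.mem_singleton_self c)).2
      have hbnot0 : b ∉ e 0 := hbnot 0 (by omega)
      have hanot1 : a ∉ e 1 := hanot 1 (by omega) (by omega)
      have hca : c ≠ a := fun h => hanot1 (h ▸ hc1)
      have hcb : c ≠ b := fun h => hbnot0 (h ▸ hc0)
      have hcM : c ∉ H.marked := by
        intro h
        rcases hmarkIff c (hmemN 0 (by omega) c hc0) h with h' | h'
        · exact hca h'
        · exact hcb h'
      have hcV : c ∈ H.verts := hNV (hmemN 0 (by omega) c hc0)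
      -- the third vertex m of e 0
      have hace0 : ({a, c} : Finset V) ⊆ e 0 := by
        intro v hv
        rcases Finset.mem_insert.mp hv with h | h
        · exact h ▸ hae
        · exact (Finset.mem_singleton.mp h) ▸ hc0
      have hm1 : (e 0 \ {a, c}).card = 1 := by
        rw [Finset.card_sdiff_of_subset hace0, hcard3 0 (by omega),
          Finset.card_pair (fun h => hca h.symm)]
      obtain ⟨m, hm⟩ := Finset.card_eq_one.mp hm1
      have hme0 : m ∈ e 0 := (Finset.mem_sdiff.mp (hm ▸ Finset.mem_singleton_self m)).1
      have hmac : m ∉ ({a, c} : Finset V) :=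
        (Finset.mem_sdiff.mp (hm ▸ Finset.mem_singleton_self m)).2
      have hma : m ≠ a := fun h => hmac (by simp [h])
      have hmc : m ≠ c := fun h => hmac (by simp [h])
      have hmb : m ≠ b := fun h => hbnot0 (h ▸ hme0)
      have hmM : m ∉ H.marked := by
        intro h
        rcases hmarkIff m (hmemN 0 (by omega) m hme0) h with h' | h'
        · exact hma h'
        · exact hmb h'
      have hmV : m ∈ H.verts := hNV (hmemN 0 (by omega) m hme0)
      have he0eq : e 0 = {a, c, m} := by
        apply Finset.eq_of_superset_of_card_ge
        · intro v hv
          rcases Finset.mem_insert.mp hv with h | h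
          · exact h ▸ hae
          · rcases Finset.mem_insert.mp h with h' | h'
            · exact h' ▸ hc0
            · exact (Finset.mem_singleton.mp h') ▸ hme0
        · rw [hcard3 0 (by omega)]
          rw [Finset.card_insert_of_notMem (by simp [hca.symm, hma.symm]),
            Finset.card_pair (fun h => hmc h.symm)]
      -- m not in later edges
      have hmnot : ∀ i, 1 ≤ i → i < M → m ∉ e i := by
        intro i h1 hi hmi
        rcases Nat.eq_or_lt_of_le h1 with h | h
        · have : m ∈ e 0 ∩ e 1 := Finset.mem_inter.mpr ⟨hme0, h ▸ hmi⟩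
          exact hmc (Finset.mem_singleton.mp (hc ▸ this))
        · have : e 0 ∩ e i = ∅ := hfar 0 i (by omega) hi
          exact absurd (Finset.mem_inter.mpr ⟨hme0, hmi⟩) (this ▸ Finset.notMem_empty m)
      have hcnot : ∀ i, 2 ≤ i → i < M → c ∉ e i := by
        intro i h2 hi hci
        have : e 0 ∩ e i = ∅ := hfar 0 i (by omega) hi
        exact absurd (Finset.mem_inter.mpr ⟨hc0, hci⟩) (this ▸ Finset.notMem_empty c)
      -- free count at least 2
      have hfree2 : 2 ≤ (H.verts \ H.marked).card := by
        have : ({c, m} : Finset V) ⊆ H.verts \ H.marked := by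
          intro v hv
          rcases Finset.mem_insert.mp hv with h | h
          · exact h ▸ Finset.mem_sdiff.mpr ⟨hcV, hcM⟩
          · exact (Finset.mem_singleton.mp h) ▸ Finset.mem_sdiff.mpr ⟨hmV, hmM⟩
        calc 2 = ({c, m} : Finset V).card := (Finset.card_pair (fun h => hmc h.symm)).symm
          _ ≤ _ := Finset.card_le_card this
      rw [MB.MarkedHypergraph.MakerWin]
      split
      · omega
      refine ⟨c, Finset.mem_sdiff.mpr ⟨hcV, hcM⟩, ?_⟩
      intro y hy
      have hy' : y ∈ H.verts ∧ y ∉ insert c H.marked := by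
        simpa [MB.MarkedHypergraph.plus, Finset.mem_sdiff] using hy
      have hyc : y ≠ c := fun h => hy'.2 (by rw [h]; exact Finset.mem_insert_self c _)
      have hyM : y ∉ H.marked := fun h => hy'.2 (Finset.mem_insert_of_mem h)
      set H' := (H.plus c).minus y with hH'
      have hE' : ∀ e' ∈ H'.edges, e' ⊆ H'.verts := by
        intro e' he'
        simp only [hH', MB.MarkedHypergraph.plus, MB.MarkedHypergraph.minus,
          Finset.mem_filter] at he' ⊢
        intro v hv
        exact Finset.mem_erase.mpr ⟨fun h => he'.2 (h ▸ hv), hE e' he'.1 hv⟩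
      by_cases hym : y = m
      · -- Breaker takes m: shorter nunchaku remains
        subst hym
        have hM' : H'.marked ⊆ H'.verts := by
          intro v hv
          simp only [hH', MB.MarkedHypergraph.plus, MB.MarkedHypergraph.minus,
            Finset.mem_erase] at hv ⊢
          refine ⟨hv.1, ?_⟩
          rcases Finset.mem_insert.mp hv.2 with h | h
          · exact h ▸ hcV
          · exact hM h
        apply IH H' hE' hM'
        set e' : ℕ → Finset V := fun i => e (i + 1) with he'def
        have hsubV : ∀ i, i < L + 1 → ∀ v ∈ e' i, v ∈ H'.verts := by
          intro i hi v hv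
          simp only [hH', MB.MarkedHypergraph.plus, MB.MarkedHypergraph.minus,
            Finset.mem_erase]
          exact ⟨fun h => hmnot (i + 1) (by omega) (by omega) (h ▸ hv),
            hNV (hmemN (i + 1) (by omega) v hv)⟩
        refine ⟨⟨(Finset.range (L + 1)).biUnion e', (Finset.range (L + 1)).image e',
          ((Finset.range (L + 1)).biUnion e') ∩ H'.marked⟩, c, b, ⟨?_, ?_, rfl⟩, ?_, ?_⟩
        · -- verts subset
          intro v hv
          obtain ⟨i, hi, hvi⟩ := Finset.mem_biUnion.mp hv
          exact hsubV i (Finset.mem_range.mp hi) v hvi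
        · -- edges subset
          intro f hf
          obtain ⟨i, hi, hfi⟩ := Finset.mem_image.mp hf
          rw [Finset.mem_range] at hi
          simp only [hH', MB.MarkedHypergraph.plus, MB.MarkedHypergraph.minus,
            Finset.mem_filter]
          exact ⟨hfi ▸ hedgeH (i + 1) (by omega),
            hfi ▸ hmnot (i + 1) (by omega) (by omega)⟩
        · -- path structure
          refine Or.inr ⟨by omega, hcb, e', rfl, rfl, ?_, ?_, hc1, ?_, ?_, ?_, ?_, ?_⟩
          · intro i hi; exact hcard3 (i + 1) (by omega)
          · intro i j hi hj hij
            exact hdist (i + 1) (j + 1) (by omega) (by omega) (by omega)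
          · show b ∈ e' (L + 1 - 1)
            have : L + 1 - 1 + 1 = M - 1 := by omega
            rw [he'def]; simp only []
            rw [this]; exact hbe
          · intro i hi; exact hinter (i + 1) (by omega)
          · intro i j hij hj
            exact hfar (i + 1) (j + 1) (by omega) (by omega)
          · intro i h1 hi
            intro hci
            rcases Nat.eq_or_lt_of_le h1 with h | h
            · exact hcnot 2 (by omega) (by omega) (by rw [← h] at hci; exact hci)
            · exact hcnot (i + 1) (by omega) (by omega) hci
          · intro i hi; exact hbnot (i + 1) (by omega)
        · -- marked = {c, b}
          show ((Finset.range (L + 1)).biUnion e') ∩ H'.marked = {c, b}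
          apply Finset.Subset.antisymm
          · intro v hv
            obtain ⟨hvV, hvm⟩ := Finset.mem_inter.mp hv
            simp only [hH', MB.MarkedHypergraph.plus, MB.MarkedHypergraph.minus,
              Finset.mem_erase] at hvm
            rcases Finset.mem_insert.mp hvm.2 with h | h
            · simp [h]
            · obtain ⟨i, hi, hvi⟩ := Finset.mem_biUnion.mp hvV
              rw [Finset.mem_range] at hi
              rcases hmarkIff v (hmemN (i + 1) (by omega) v hvi) h with h' | h'
              · exact absurd (h' ▸ hvi) (hanot (i + 1) (by omega) (by omega))
              · simp [h']
          · intro v hv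
            rcases Finset.mem_insert.mp hv with h | h
            · rw [h]
              refine Finset.mem_inter.mpr ⟨?_, ?_⟩
              · exact Finset.mem_biUnion.mpr ⟨0, Finset.mem_range.mpr (by omega), hc1⟩
              · simp only [hH', MB.MarkedHypergraph.plus, MB.MarkedHypergraph.minus,
                  Finset.mem_erase]
                exact ⟨fun h => hmc h.symm, Finset.mem_insert_self c _⟩
            · rw [Finset.mem_singleton] at h
              rw [h]
              refine Finset.mem_inter.mpr ⟨?_, ?_⟩
              · refine Finset.mem_biUnion.mpr ⟨L, Finset.mem_range.mpr (by omega), ?_⟩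
                show b ∈ e (L + 1)
                have : L + 1 = M - 1 := by omega
                rw [this]; exact hbe
              · simp only [hH', MB.MarkedHypergraph.plus, MB.MarkedHypergraph.minus,
                  Finset.mem_erase]
                exact ⟨fun h => hmb h.symm, Finset.mem_insert_of_mem hbM⟩
      · -- Breaker plays elsewhere: trivial win via e 0
        have hye0 : y ∉ e 0 := by
          rw [he0eq]
          intro hv
          rcases Finset.mem_insert.mp hv with h | h
          · exact hyM (h ▸ haM)
          · rcases Finset.mem_insert.mp h with h' | h'
            · exact hyc h'
            · exact hym (Finset.mem_singleton.mp h')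
        apply trivA _ H' rfl hE'
        refine ⟨e 0, ?_, ?_⟩
        · simp only [hH', MB.MarkedHypergraph.plus, MB.MarkedHypergraph.minus,
            Finset.mem_filter]
          exact ⟨hedgeH 0 (by omega), hye0⟩
        · have hsub : e 0 \ H'.marked ⊆ {m} := by
            intro v hv
            obtain ⟨hv1, hv2⟩ := Finset.mem_sdiff.mp hv
            simp only [hH', MB.MarkedHypergraph.plus, MB.MarkedHypergraph.minus,
              Finset.mem_erase] at hv2
            have hvy : v ≠ y := fun h => hye0 (h ▸ hv1)
            have hvi : v ∉ insert c H.marked := fun h => hv2 ⟨hvy, h⟩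
            have hvc : v ≠ c := fun h => hvi (by rw [h]; exact Finset.mem_insert_self c _)
            have hvM : v ∉ H.marked := fun h => hvi (Finset.mem_insert_of_mem h)
            have hva : v ≠ a := fun h => hvM (h ▸ haM)
            rw [he0eq] at hv1
            rcases Finset.mem_insert.mp hv1 with h | h
            · exact absurd h hva
            · rcases Finset.mem_insert.mp h with h' | h'
              · exact absurd h' hvc
              · exact h'
          calc (e 0 \ H'.marked).card ≤ ({m} : Finset V).card := Finset.card_le_card hsub
            _ = 1 := Finset.card_singleton m

end MB
/-- Proposition 3.2: any marked hypergraph containing a nunchaku is a Maker win. -/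
theorem statement15 {V : Type} [DecidableEq V] (H : MB.MarkedHypergraph V)
    (hval : H.IsValid) (hN : ∃ N, MB.MarkedHypergraph.IsSub N H ∧ MB.IsNunchaku N) :
    H.MakerWin := by
  obtain ⟨N, hsub, a, b, L, hL, hpath, hmk⟩ := hN
  obtain ⟨L', rfl⟩ : ∃ L', L = L' + 1 := ⟨L - 1, by omega⟩
  exact MB.nun_win L' H (fun e he => (hval.2.1 e he).1) hval.2.2 ⟨N, a, b, hsub, hpath, hmk⟩
end
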